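/- Embedding of the space L^{(q,p,η)}_{r,φ_1,δ} into Campanato spaces: let 0<q≤1, q≤p<∞, 0<η<∞ and 1≤r<∞. For every g ∈ L^{(q,p,η)}_{r,φ_1,δ}, one has ‖g‖_{L_{r,φ_2,δ}} ≤ ‖g‖_{L_{r,φ_1,δ}} ≤ ‖g‖_{L^{(q,p,η)}_{r,φ_1,δ}}. -/

import Mathlib

open MeasureTheory ENNReal Set
open scoped Classical

noncomputable section

namespace HA

/-- `ℝ^d` with the Euclidean metric. -/
abbrev Ed (d : ℕ) : Type := EuclideanSpace ℝ (Fin d)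

/-- The unit cube `k + [0,1)^d`. -/
def unitCube (d : ℕ) (k : Fin d → ℤ) : Set (Ed d) :=
  {x | ∀ i, (k i : ℝ) ≤ x i ∧ x i < (k i : ℝ) + 1}

/-- Closed axis-parallel cube with center `c` and side-length `ℓ`. -/
def cube (d : ℕ) (c : Ed d) (ℓ : ℝ) : Set (Ed d) :=
  {x | ∀ i, |x i - c i| ≤ ℓ / 2}

/-- Open axis-parallel cube with center `c` and side-length `ℓ`. -/
def openCube (d : ℕ) (c : Ed d) (ℓ : ℝ) : Set (Ed d) :=
  {x | ∀ i, |x i - c i| < ℓ / 2}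

/-- The Wiener amalgam quasi-norm `‖F‖_{q,p}` of an `ℝ≥0∞`-valued function:
`(∑_{k ∈ ℤ^d} (∫_{Q_k} F^q)^{p/q})^{1/p}`. -/
def eAmalgam (d : ℕ) (q p : ℝ) (F : Ed d → ℝ≥0∞) : ℝ≥0∞ :=
  (∑' k : Fin d → ℤ, ((∫⁻ x in unitCube d k, F x ^ q) ^ (1 / q)) ^ p) ^ (1 / p)

/-- The Wiener amalgam quasi-norm `‖f‖_{q,p}` of a complex-valued function. -/
def amalgamNorm (d : ℕ) (q p : ℝ) (f : Ed d → ℂ) : ℝ≥0∞ :=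
  eAmalgam d q p fun x => (‖f x‖₊ : ℝ≥0∞)

/-- The Hardy–Littlewood maximal function `𝔐 f`. -/
def maximalFn (d : ℕ) (f : Ed d → ℂ) (x : Ed d) : ℝ≥0∞ :=
  ⨆ (r : ℝ) (_ : 0 < r),
    (volume (Metric.ball x r))⁻¹ * ∫⁻ y in Metric.ball x r, (‖f y‖₊ : ℝ≥0∞)

/-- The `ℓ^u` norm of a sequence in `ℝ≥0∞`; for `u = ∞` it is the supremum. -/
def ellU (u : ℝ≥0∞) (F : ℕ → ℝ≥0∞) : ℝ≥0∞ :=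
  if u = ∞ then ⨆ n, F n else (∑' n, F n ^ u.toReal) ^ (1 / u.toReal)

/-- Polynomial functions on `ℝ^d` (complex valued) of degree at most `δ`. -/
def polySpace (d δ : ℕ) : Set (Ed d → ℂ) :=
  {g | ∃ P : MvPolynomial (Fin d) ℂ, P.totalDegree ≤ δ ∧
        ∀ x : Ed d, g x = MvPolynomial.eval (fun i => (x i : ℂ)) P}

/-- `P` is a polynomial of degree at most `δ` with `∫_Q (f - P) 𝔮 = 0`
for every polynomial `𝔮` of degree at most `δ`. -/
def projCond (d δ : ℕ) (Q : Set (Ed d)) (f P : Ed d → ℂ) : Prop :=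
  P ∈ polySpace d δ ∧ ∀ 𝔮 ∈ polySpace d δ, ∫ x in Q, (f x - P x) * 𝔮 x = 0

/-- The polynomial projection `P_Q^δ(f)` (defaulting to `0` when it does not exist). -/
def polyProj (d δ : ℕ) (Q : Set (Ed d)) (f : Ed d → ℂ) : Ed d → ℂ :=
  if h : ∃ P, projCond d δ Q f P then h.choose else 0

/-- Membership in `L^r_loc(ℝ^d)`. -/
def memLocLr (d : ℕ) (r : ℝ) (f : Ed d → ℂ) : Prop :=
  AEStronglyMeasurable f volume ∧
    ∀ (c : Ed d) (ℓ : ℝ), 0 < ℓ → (∫⁻ x in cube d c ℓ, (‖f x‖₊ : ℝ≥0∞) ^ r) ≠ ∞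

/-- A countable family of (nondegenerate) cubes contained in `Ω` with overlap at most `K`. -/
structure CubeFamily (d : ℕ) (K : ℝ) (Ω : Set (Ed d)) where
  center : ℕ → Ed d
  side : ℕ → ℝ
  side_pos : ∀ n, 0 < side n
  cube_subset : ∀ n, cube d (center n) (side n) ⊆ Ω
  overlap : ∀ x, (∑' n, (cube d (center n) (side n)).indicator (fun _ => (1 : ℝ≥0∞)) x)
      ≤ ENNReal.ofReal K

/-- `|Q|^{1/r'} (∫_Q |g - P_Q^δ(g)|^r)^{1/r}` (note `1/r' = 1 - 1/r`). -/
def oscTerm (d δ : ℕ) (r : ℝ) (g : Ed d → ℂ) (Q : Set (Ed d)) : ℝ≥0∞ :=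
  volume Q ^ (1 - 1 / r) * (∫⁻ x in Q, (‖g x - polyProj d δ Q g x‖₊ : ℝ≥0∞) ^ r) ^ (1 / r)

/-- `|Q|^{1/r'} (∫_Q |g|^r)^{1/r}`. -/
def intTerm (d : ℕ) (r : ℝ) (g : Ed d → ℂ) (Q : Set (Ed d)) : ℝ≥0∞ :=
  volume Q ^ (1 - 1 / r) * (∫⁻ x in Q, (‖g x‖₊ : ℝ≥0∞) ^ r) ^ (1 / r)

/-- `inf_{𝔭 ∈ 𝒫_δ} |Q|^{1/r'} (∫_Q |g - 𝔭|^r)^{1/r}`. -/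
def bestTerm (d δ : ℕ) (r : ℝ) (g : Ed d → ℂ) (Q : Set (Ed d)) : ℝ≥0∞ :=
  ⨅ P ∈ polySpace d δ,
    volume Q ^ (1 - 1 / r) * (∫⁻ x in Q, (‖g x - P x‖₊ : ℝ≥0∞) ^ r) ^ (1 / r)

/-- The functional `O(g, Ω, r)`. -/
def Ofun (d δ : ℕ) (K C0 r : ℝ) (g : Ed d → ℂ) (Ω : Set (Ed d)) : ℝ≥0∞ :=
  ⨆ F : CubeFamily d K Ω, ∑' n, oscTerm d δ r g (cube d (F.center n) (C0 * F.side n))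

/-- The functional `Õ(g, Ω, r)`. -/
def Otilde (d δ : ℕ) (K C0 r : ℝ) (g : Ed d → ℂ) (Ω : Set (Ed d)) : ℝ≥0∞ :=
  ⨆ F : CubeFamily d K Ω, ∑' n, bestTerm d δ r g (cube d (F.center n) (C0 * F.side n))

/-- The local functional `O(g, Ω, r)^{loc}`. -/
def OfunLoc (d δ : ℕ) (K C0 r : ℝ) (g : Ed d → ℂ) (Ω : Set (Ed d)) : ℝ≥0∞ :=
  ⨆ F : CubeFamily d K Ω, ∑' n,
    if volume (cube d (F.center n) (C0 * F.side n)) < 1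
    then oscTerm d δ r g (cube d (F.center n) (C0 * F.side n))
    else intTerm d r g (cube d (F.center n) (C0 * F.side n))

/-- `φ₁(Q) = ‖χ_Q‖_{q,p} / |Q|`. -/
def φ1 (d : ℕ) (q p : ℝ) (c : Ed d) (ℓ : ℝ) : ℝ≥0∞ :=
  eAmalgam d q p ((cube d c ℓ).indicator fun _ => (1 : ℝ≥0∞)) * (volume (cube d c ℓ))⁻¹

/-- `φ₂(Q) = ‖χ_Q‖_{L^q} / |Q| = |Q|^{1/q} / |Q|`. -/
def φ2 (d : ℕ) (q : ℝ) (c : Ed d) (ℓ : ℝ) : ℝ≥0∞ :=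
  volume (cube d c ℓ) ^ (1 / q) * (volume (cube d c ℓ))⁻¹

/-- The Campanato norm `‖f‖_{𝓛_{r,φ,δ}}`. -/
def campanato (d δ : ℕ) (r : ℝ) (φ : Ed d → ℝ → ℝ≥0∞) (f : Ed d → ℂ) : ℝ≥0∞ :=
  ⨆ (c : Ed d) (ℓ : ℝ) (_ : 0 < ℓ),
    (φ c ℓ)⁻¹ * ((volume (cube d c ℓ))⁻¹ *
      ∫⁻ x in cube d c ℓ, (‖f x - polyProj d δ (cube d c ℓ) f x‖₊ : ℝ≥0∞) ^ r) ^ (1 / r)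

/-- The local Campanato norm `‖f‖_{𝓛^{loc}_{r,φ,δ}}`. -/
def campanatoLoc (d δ : ℕ) (r : ℝ) (φ : Ed d → ℝ → ℝ≥0∞) (f : Ed d → ℂ) : ℝ≥0∞ :=
  (⨆ (c : Ed d) (ℓ : ℝ) (_ : 0 < ℓ) (_ : 1 ≤ volume (cube d c ℓ)),
    (φ c ℓ)⁻¹ * ((volume (cube d c ℓ))⁻¹ *
      ∫⁻ x in cube d c ℓ, (‖f x‖₊ : ℝ≥0∞) ^ r) ^ (1 / r)) +
  (⨆ (c : Ed d) (ℓ : ℝ) (_ : 0 < ℓ) (_ : volume (cube d c ℓ) < 1),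
    (φ c ℓ)⁻¹ * ((volume (cube d c ℓ))⁻¹ *
      ∫⁻ x in cube d c ℓ, (‖f x - polyProj d δ (cube d c ℓ) f x‖₊ : ℝ≥0∞) ^ r) ^ (1 / r))

/-- `‖∑_{j ∈ ℤ} 2^{jη} χ_{Ω^j}‖_{q/η, p/η}`. -/
def layerNorm (d : ℕ) (q p η : ℝ) (Ω : ℤ → Set (Ed d)) : ℝ≥0∞ :=
  eAmalgam d (q / η) (p / η) fun x =>
    ∑' j : ℤ, (Ω j).indicator (fun _ => (2 : ℝ≥0∞) ^ ((j : ℝ) * η)) x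

/-- The set of admissible constants in the defining inequality of `𝓛^{(q,p,η)}_{r,φ₁,δ}`. -/
def ONormSet (d δ : ℕ) (K C0 q p η r : ℝ) (g : Ed d → ℂ) : Set ℝ≥0∞ :=
  {C | ∀ Ω : ℤ → Set (Ed d), (∀ j, IsOpen (Ω j)) → (∀ j, Ω j ≠ univ) →
    layerNorm d q p η Ω ≠ ∞ →
    (∑' j : ℤ, (2 : ℝ≥0∞) ^ (j : ℝ) * Ofun d δ K C0 r g (Ω j)) ≤
      C * layerNorm d q p η Ω ^ (1 / η)}

/-- The variant of `ONormSet` defined through the functional `Õ`. -/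
def OtildeNormSet (d δ : ℕ) (K C0 q p η r : ℝ) (g : Ed d → ℂ) : Set ℝ≥0∞ :=
  {C | ∀ Ω : ℤ → Set (Ed d), (∀ j, IsOpen (Ω j)) → (∀ j, Ω j ≠ univ) →
    layerNorm d q p η Ω ≠ ∞ →
    (∑' j : ℤ, (2 : ℝ≥0∞) ^ (j : ℝ) * Otilde d δ K C0 r g (Ω j)) ≤
      C * layerNorm d q p η Ω ^ (1 / η)}

/-- The set of admissible constants in the defining inequality of `𝓛^{(q,p,η)loc}_{r,φ₁,δ}`. -/
def ONormSetLoc (d δ : ℕ) (K C0 q p η r : ℝ) (g : Ed d → ℂ) : Set ℝ≥0∞ :=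
  {C | ∀ Ω : ℤ → Set (Ed d), (∀ j, IsOpen (Ω j)) → (∀ j, Ω j ≠ univ) →
    layerNorm d q p η Ω ≠ ∞ →
    (∑' j : ℤ, (2 : ℝ≥0∞) ^ (j : ℝ) * OfunLoc d δ K C0 r g (Ω j)) ≤
      C * layerNorm d q p η Ω ^ (1 / η)}

/-- A `(q,r,s)`-atom with associated cube `Q`. -/
def IsHAtom (d : ℕ) (q : ℝ) (r : ℝ≥0∞) (s : ℕ) (a : Ed d → ℂ) (Q : Set (Ed d)) : Prop :=
  (∀ x ∉ Q, a x = 0) ∧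
  eLpNorm a r volume ≤ volume Q ^ (1 / r.toReal - 1 / q) ∧
  (∀ β : Fin d → ℕ, (∑ i, β i) ≤ s → ∫ x, (∏ i, (x i : ℂ) ^ β i) * a x = 0)

/-- A local `(q,r,s)`-atom with associated cube `Q`: vanishing moments are required
only when `|Q| < 1`. -/
def IsLocalHAtom (d : ℕ) (q : ℝ) (r : ℝ≥0∞) (s : ℕ) (a : Ed d → ℂ) (Q : Set (Ed d)) : Prop :=
  (∀ x ∉ Q, a x = 0) ∧
  eLpNorm a r volume ≤ volume Q ^ (1 / r.toReal - 1 / q) ∧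
  (volume Q < 1 → ∀ β : Fin d → ℕ, (∑ i, β i) ≤ s → ∫ x, (∏ i, (x i : ℂ) ^ β i) * a x = 0)


lemma measurableSet_unitCube (d : ℕ) (k : Fin d → ℤ) : MeasurableSet (unitCube d k) := by
  have : unitCube d k = ⋂ i, (fun x : Ed d => x i) ⁻¹' (Ico (k i : ℝ) ((k i : ℝ) + 1)) := by
    ext x; simp [unitCube, mem_iInter, and_comm]
  rw [this]
  exact MeasurableSet.iInter fun i => (EuclideanSpace.proj i : Ed d →L[ℝ] ℝ).continuous.measurable measurableSet_Ico

lemma measurableSet_cube (d : ℕ) (c : Ed d) (ℓ : ℝ) : MeasurableSet (cube d c ℓ) := by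
  have : cube d c ℓ = ⋂ i, (fun x : Ed d => x i) ⁻¹' {t | |t - c i| ≤ ℓ / 2} := by
    ext x; simp [cube, mem_iInter]
  rw [this]
  refine MeasurableSet.iInter fun i => (EuclideanSpace.proj i : Ed d →L[ℝ] ℝ).continuous.measurable ?_
  have : {t : ℝ | |t - c i| ≤ ℓ / 2} = Icc (c i - ℓ/2) (c i + ℓ/2) := by
    ext t
    simp only [mem_setOf_eq, mem_Icc, abs_le]
    constructor <;> intro h <;> constructor <;> linarith [h.1, h.2]
  rw [this]; exact measurableSet_Icc

lemma isOpen_openCube (d : ℕ) (c : Ed d) (ℓ : ℝ) : IsOpen (openCube d c ℓ) := by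
  have : openCube d c ℓ = ⋂ i, (fun x : Ed d => x i) ⁻¹' {t | |t - c i| < ℓ / 2} := by
    ext x; simp [openCube, mem_iInter]
  rw [this]
  refine isOpen_iInter_of_finite fun i => ?_
  have h1 : Continuous fun x : Ed d => x i := (EuclideanSpace.proj i : Ed d →L[ℝ] ℝ).continuous
  have h2 : IsOpen {t : ℝ | |t - c i| < ℓ / 2} := by
    have : Continuous fun t : ℝ => |t - c i| := (continuous_id.sub continuous_const).abs
    exact isOpen_lt this continuous_const
  exact h2.preimage h1

lemma openCube_subset_cube (d : ℕ) (c : Ed d) (ℓ : ℝ) : openCube d c ℓ ⊆ cube d c ℓ :=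
  fun x hx i => (hx i).le

lemma center_mem_cube (d : ℕ) (c : Ed d) {ℓ : ℝ} (h : 0 ≤ ℓ) : c ∈ cube d c ℓ := by
  intro i; simp; linarith

lemma center_mem_openCube (d : ℕ) (c : Ed d) {ℓ : ℝ} (h : 0 < ℓ) : c ∈ openCube d c ℓ := by
  intro i; simp; linarith

lemma volume_cube_lt_top (d : ℕ) (c : Ed d) (ℓ : ℝ) : volume (cube d c ℓ) < ∞ := by
  have hsub : cube d c ℓ ⊆ Metric.closedBall c (Real.sqrt (d * (ℓ/2)^2)) := by
    intro x hx
    rw [Metric.mem_closedBall, dist_eq_norm, EuclideanSpace.norm_eq]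
    apply Real.sqrt_le_sqrt
    have : ∀ i, ‖(x - c) i‖ ^ 2 ≤ (ℓ/2)^2 := by
      intro i
      have hxi : |x i - c i| ≤ ℓ/2 := hx i
      have : ‖(x - c) i‖ = |x i - c i| := by
        simp [PiLp.sub_apply, Real.norm_eq_abs]
      rw [this]
      calc |x i - c i| ^ 2 = |x i - c i| * |x i - c i| := by ring
        _ ≤ (ℓ/2) * (ℓ/2) := by
            apply mul_le_mul hxi hxi (abs_nonneg _) (le_trans (abs_nonneg _) hxi)
        _ = (ℓ/2)^2 := by ring
    calc ∑ i, ‖(x - c) i‖ ^ 2 ≤ ∑ _i : Fin d, (ℓ/2)^2 := Finset.sum_le_sum fun i _ => this i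
      _ = d * (ℓ/2)^2 := by simp [Finset.sum_const, nsmul_eq_mul]
  exact lt_of_le_of_lt (measure_mono hsub) (measure_closedBall_lt_top)

lemma volume_cube_pos (d : ℕ) (c : Ed d) {ℓ : ℝ} (h : 0 < ℓ) : 0 < volume (cube d c ℓ) := by
  refine lt_of_lt_of_le ?_ (measure_mono (openCube_subset_cube d c ℓ))
  exact (isOpen_openCube d c ℓ).measure_pos volume ⟨c, center_mem_openCube d c h⟩

lemma pairwise_disjoint_unitCube (d : ℕ) :
    Pairwise (Function.onFun Disjoint fun k : Fin d → ℤ => unitCube d k) := by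
  intro k k' hkk'
  rw [Function.onFun, Set.disjoint_left]
  intro x hx hx'
  apply hkk'
  funext i
  have h1 := hx i; have h2 := hx' i
  have : (k i : ℝ) = (k' i : ℝ) := by
    have a1 : (k i : ℝ) ≤ x i := h1.1
    have a2 : x i < (k i : ℝ) + 1 := h1.2
    have b1 : (k' i : ℝ) ≤ x i := h2.1
    have b2 : x i < (k' i : ℝ) + 1 := h2.2
    have : k i = k' i := by
      have hk1 : (k i : ℝ) < (k' i : ℝ) + 1 := lt_of_le_of_lt a1 b2
      have hk2 : (k' i : ℝ) < (k i : ℝ) + 1 := lt_of_le_of_lt b1 a2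
      have : k i < k' i + 1 := by exact_mod_cast hk1
      have h2' : k' i < k i + 1 := by exact_mod_cast hk2
      omega
    exact_mod_cast this
  exact_mod_cast this

lemma tsum_volume_inter_unitCube_le (d : ℕ) {S : Set (Ed d)} (hS : MeasurableSet S) :
    ∑' k : Fin d → ℤ, volume (S ∩ unitCube d k) ≤ volume S := by
  rw [← measure_iUnion (fun k k' h => ((pairwise_disjoint_unitCube d) h).mono
      inter_subset_right inter_subset_right)
      (fun k => hS.inter (measurableSet_unitCube d k))]
  exact measure_mono (iUnion_subset fun k => inter_subset_left)

lemma indicator_rpow {α : Type*} (S : Set α) {s : ℝ} (hs : 0 < s) (x : α) :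
    (S.indicator (fun _ => (1:ℝ≥0∞)) x) ^ s = S.indicator (fun _ => (1:ℝ≥0∞)) x := by
  by_cases hx : x ∈ S
  · simp [hx]
  · simp [hx, ENNReal.zero_rpow_of_pos hs]

lemma setLIntegral_indicator_one (d : ℕ) {S : Set (Ed d)} (hS : MeasurableSet S)
    (k : Fin d → ℤ) :
    ∫⁻ x in unitCube d k, S.indicator (fun _ => (1:ℝ≥0∞)) x = volume (S ∩ unitCube d k) := by
  rw [lintegral_indicator hS, setLIntegral_one, Measure.restrict_apply hS]

lemma eAmalgam_indicator (d : ℕ) {s : ℝ} (t : ℝ) (hs : 0 < s) {S : Set (Ed d)}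
    (hS : MeasurableSet S) :
    eAmalgam d s t (S.indicator fun _ => 1) =
      (∑' k : Fin d → ℤ, volume (S ∩ unitCube d k) ^ ((1/s) * t)) ^ (1/t) := by
  unfold eAmalgam
  congr 1
  refine tsum_congr fun k => ?_
  rw [← ENNReal.rpow_mul]
  congr 1
  calc ∫⁻ x in unitCube d k, (S.indicator (fun _ => (1:ℝ≥0∞)) x) ^ s
      = ∫⁻ x in unitCube d k, S.indicator (fun _ => (1:ℝ≥0∞)) x := by
        refine lintegral_congr fun x => indicator_rpow S hs x
    _ = volume (S ∩ unitCube d k) := setLIntegral_indicator_one d hS k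

lemma tsum_rpow_le {ι : Type*} (a : ι → ℝ≥0∞) {e : ℝ} (he : 1 ≤ e) :
    ∑' i, a i ^ e ≤ (∑' i, a i) ^ e := by
  set A := ∑' i, a i with hA
  by_cases hAtop : A = ∞
  · rw [hAtop, ENNReal.top_rpow_of_pos (by linarith)]; exact le_top
  have key : ∀ i, a i ^ e ≤ A ^ (e - 1) * a i := by
    intro i
    by_cases hai : a i = 0
    · simp [hai, ENNReal.zero_rpow_of_pos (by linarith : (0:ℝ) < e)]
    have haiA : a i ≤ A := ENNReal.le_tsum i
    have haitop : a i ≠ ∞ := fun h => hAtop (top_le_iff.mp (h ▸ haiA))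
    calc a i ^ e = a i ^ (e - 1) * a i := by
          rw [show e = (e-1)+1 by ring, ENNReal.rpow_add _ _ hai haitop, ENNReal.rpow_one]
          ring_nf
      _ ≤ A ^ (e - 1) * a i :=
          mul_le_mul_left (ENNReal.rpow_le_rpow haiA (by linarith)) _
  calc ∑' i, a i ^ e ≤ ∑' i, A ^ (e - 1) * a i := ENNReal.tsum_le_tsum key
    _ = A ^ (e - 1) * A := by rw [ENNReal.tsum_mul_left]
    _ ≤ A ^ e := by
        by_cases hA0 : A = 0
        · simp [hA0]
        · nth_rewrite 2 [← ENNReal.rpow_one A]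
          rw [← ENNReal.rpow_add _ _ hA0 hAtop]
          norm_num

lemma eAmalgam_indicator_le (d : ℕ) {q p : ℝ} (hq : 0 < q) (hqp : q ≤ p)
    {S : Set (Ed d)} (hS : MeasurableSet S) :
    eAmalgam d q p (S.indicator fun _ => 1) ≤ volume S ^ (1/q) := by
  have hp : 0 < p := lt_of_lt_of_le hq hqp
  rw [eAmalgam_indicator d p hq hS]
  have he : (1:ℝ) ≤ (1/q) * p := by
    rw [one_div, inv_mul_eq_div, le_div_iff₀ hq]; linarith
  calc (∑' k : Fin d → ℤ, volume (S ∩ unitCube d k) ^ ((1/q) * p)) ^ (1/p)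
      ≤ ((∑' k : Fin d → ℤ, volume (S ∩ unitCube d k)) ^ ((1/q) * p)) ^ (1/p) :=
        ENNReal.rpow_le_rpow (tsum_rpow_le _ he) (by positivity)
    _ = (∑' k : Fin d → ℤ, volume (S ∩ unitCube d k)) ^ (1/q) := by
        rw [← ENNReal.rpow_mul]
        congr 1
        field_simp
    _ ≤ volume S ^ (1/q) :=
        ENNReal.rpow_le_rpow (tsum_volume_inter_unitCube_le d hS) (by positivity)

lemma eAmalgam_indicator_mono (d : ℕ) {q p : ℝ} (hq : 0 < q) (hp : 0 < p)
    {S T : Set (Ed d)} (hS : MeasurableSet S) (hT : MeasurableSet T) (hST : S ⊆ T) :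
    eAmalgam d q p (S.indicator fun _ => 1) ≤ eAmalgam d q p (T.indicator fun _ => 1) := by
  rw [eAmalgam_indicator d p hq hS, eAmalgam_indicator d p hq hT]
  refine ENNReal.rpow_le_rpow (ENNReal.tsum_le_tsum fun k => ?_) (by positivity)
  exact ENNReal.rpow_le_rpow (measure_mono (inter_subset_inter_left _ hST)) (by positivity)

lemma eAmalgam_indicator_ne_top (d : ℕ) {q p : ℝ} (hq : 0 < q) (hqp : q ≤ p)
    {S : Set (Ed d)} (hS : MeasurableSet S) (hvol : volume S ≠ ∞) :
    eAmalgam d q p (S.indicator fun _ => 1) ≠ ∞ := by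
  intro h
  have := eAmalgam_indicator_le d hq hqp hS
  rw [h] at this
  exact (ENNReal.rpow_lt_top_of_nonneg (by positivity) hvol).ne (top_le_iff.mp this)

lemma exists_volume_inter_unitCube_pos (d : ℕ) (c : Ed d) {ℓ : ℝ} (hℓ : 0 < ℓ) :
    ∃ k : Fin d → ℤ, 0 < volume (cube d c ℓ ∩ unitCube d k) := by
  refine ⟨fun i => ⌊c i⌋, ?_⟩
  set V : Set (Ed d) := ⋂ i : Fin d, (fun x : Ed d => x i) ⁻¹'
      (Ioo (c i) (min (c i + ℓ/2) ((⌊c i⌋ : ℝ) + 1))) with hV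
  have hmem : ∀ x : Ed d, x ∈ V ↔
      ∀ i, c i < x i ∧ x i < min (c i + ℓ/2) ((⌊c i⌋ : ℝ) + 1) := by
    intro x
    simp [hV, mem_iInter, mem_preimage, mem_Ioo]
  have hVopen : IsOpen V :=
    isOpen_iInter_of_finite fun i => isOpen_Ioo.preimage (EuclideanSpace.proj i : Ed d →L[ℝ] ℝ).continuous
  have hub : ∀ i : Fin d, c i < min (c i + ℓ/2) ((⌊c i⌋ : ℝ) + 1) :=
    fun i => lt_min (by linarith) (Int.lt_floor_add_one (c i))
  have hVne : V.Nonempty := by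
    refine ⟨WithLp.toLp 2 (fun i => (c i + min (c i + ℓ/2) ((⌊c i⌋ : ℝ) + 1)) / 2 : Fin d → ℝ), ?_⟩
    rw [hmem]
    intro i
    simp only [PiLp.toLp_apply]
    constructor
    · have := hub i; linarith
    · have := hub i; linarith
  have hVsub : V ⊆ cube d c ℓ ∩ unitCube d (fun i => ⌊c i⌋) := by
    intro x hx
    rw [hmem] at hx
    constructor
    · intro i
      have h1 := (hx i).1
      have h2 := lt_of_lt_of_le (hx i).2 (min_le_left _ _)
      rw [abs_le]; constructor <;> linarith
    · intro i
      have h1 := (hx i).1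
      have h2 := lt_of_lt_of_le (hx i).2 (min_le_right _ _)
      have h3 : (⌊c i⌋ : ℝ) ≤ c i := Int.floor_le (c i)
      exact ⟨by linarith, by linarith⟩
  exact lt_of_lt_of_le (hVopen.measure_pos volume hVne) (measure_mono hVsub)


lemma phi1_le_phi2 (d : ℕ) {q p : ℝ} (hq : 0 < q) (hqp : q ≤ p) (c : Ed d) (ℓ : ℝ) :
    φ1 d q p c ℓ ≤ φ2 d q c ℓ :=
  mul_le_mul_left (eAmalgam_indicator_le d hq hqp (measurableSet_cube d c ℓ)) _

lemma campanato_phi2_le_phi1 (d δ : ℕ) {q p : ℝ} (r : ℝ) (hq : 0 < q) (hqp : q ≤ p)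
    (g : Ed d → ℂ) :
    campanato d δ r (φ2 d q) g ≤ campanato d δ r (φ1 d q p) g := by
  unfold campanato
  refine iSup_mono fun c => iSup_mono fun ℓ => iSup_mono fun hℓ => ?_
  exact mul_le_mul_left (ENNReal.inv_le_inv.mpr (phi1_le_phi2 d hq hqp c ℓ)) _

lemma campanato_dzero (δ : ℕ) {r : ℝ} (hr : 0 < r) (φ : Ed 0 → ℝ → ℝ≥0∞) (g : Ed 0 → ℂ) :
    campanato 0 δ r φ g = 0 := by
  have hcube : ∀ (c : Ed 0) (ℓ : ℝ), cube 0 c ℓ = univ :=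
    fun c ℓ => eq_univ_of_forall (fun x i => i.elim0)
  have hvol0 : volume (univ : Set (Ed 0)) ≠ 0 :=
    (isOpen_univ.measure_pos volume ⟨default, trivial⟩).ne'
  have hvoltop : volume (univ : Set (Ed 0)) ≠ ∞ :=
    ((Set.toFinite (univ : Set (Ed 0))).isCompact.measure_lt_top).ne
  have hex : ∃ P, projCond 0 δ univ g P := by
    refine ⟨fun _ => g default, ⟨⟨MvPolynomial.C (g default), ?_, fun x => by simp⟩, ?_⟩⟩
    · simp [MvPolynomial.totalDegree_C]
    · intro 𝔮 h𝔮
      have : ∀ x : Ed 0, (g x - g default) * 𝔮 x = 0 := by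
        intro x
        rw [Subsingleton.elim x default]
        ring
      simp only [this, integral_zero]
  have hPg : ∀ x, g x - polyProj 0 δ univ g x = 0 := by
    have hspec : projCond 0 δ univ g (polyProj 0 δ univ g) := by
      rw [polyProj, dif_pos hex]
      exact hex.choose_spec
    set P := polyProj 0 δ univ g with hPdef
    set w := g default - P default with hw
    have h𝔮 : (fun _ : Ed 0 => (starRingEnd ℂ) w) ∈ polySpace 0 δ := by
      refine ⟨MvPolynomial.C ((starRingEnd ℂ) w), ?_, fun x => by simp⟩
      simp [MvPolynomial.totalDegree_C]
    have hint := hspec.2 _ h𝔮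
    have hconst : (fun x : Ed 0 => (g x - P x) * (starRingEnd ℂ) w) =
        fun _ : Ed 0 => w * (starRingEnd ℂ) w := by
      funext x
      rw [Subsingleton.elim x default]
    rw [setIntegral_univ] at hint
    rw [hconst, integral_const, smul_eq_zero] at hint
    have hw0 : w = 0 := by
      rcases hint with h | h
      · exact absurd h (by
          simp only [Measure.real, ENNReal.toReal_eq_zero_iff]
          push_neg
          exact ⟨hvol0, hvoltop⟩)
      · rw [Complex.mul_conj] at h
        exact Complex.normSq_eq_zero.mp (by exact_mod_cast h)
    intro x
    rw [Subsingleton.elim x default, ← hw, hw0]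
  unfold campanato
  refine le_antisymm (iSup_le fun c => iSup_le fun ℓ => iSup_le fun hℓ => ?_) zero_le
  rw [hcube c ℓ]
  have hzero : ∫⁻ x in (univ : Set (Ed 0)), (‖g x - polyProj 0 δ univ g x‖₊ : ℝ≥0∞) ^ r = 0 := by
    have : ∀ x : Ed 0, (‖g x - polyProj 0 δ univ g x‖₊ : ℝ≥0∞) ^ r = 0 := by
      intro x
      rw [hPg x]
      simp [ENNReal.zero_rpow_of_pos hr]
    simp only [this, lintegral_const, zero_mul]
  rw [hzero, mul_zero, ENNReal.zero_rpow_of_pos (by positivity : (0:ℝ) < 1/r), mul_zero]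

lemma tsum_indicator_le_one {α : Type*} {S : ℕ → Set α} (h : Pairwise (Function.onFun Disjoint S))
    (x : α) : ∑' n, (S n).indicator (fun _ => (1:ℝ≥0∞)) x ≤ 1 := by
  by_cases hx : ∃ n, x ∈ S n
  · obtain ⟨n₀, hn₀⟩ := hx
    rw [tsum_eq_single n₀ (fun m hm => indicator_of_notMem
      (fun hmx => Set.disjoint_left.mp (h hm) hmx hn₀) _)]
    simp [hn₀]
  · push_neg at hx
    simp [indicator_of_notMem, hx]

/-- Centers of the auxiliary cube family. -/
def famCenter (d : ℕ) (c : Ed d) (i₀ : Fin d) (a gg : ℝ) : ℕ → Ed d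
  | 0 => c
  | (m+1) => WithLp.toLp 2 (fun i => if i = i₀ then c i + (a + gg * (2⁻¹:ℝ)^(m+1)) else c i : Fin d → ℝ)

/-- Side lengths of the auxiliary cube family. -/
def famSide (ℓ C0 gg : ℝ) : ℕ → ℝ
  | 0 => ℓ / C0
  | (m+1) => gg * (2⁻¹:ℝ)^(m+1) / 16

lemma oscTerm_le_Ofun (d δ : ℕ) {K C0 r ℓ : ℝ} (hd : 0 < d) (hK : 1 ≤ K) (hC0 : 1 < C0)
    (hℓ : 0 < ℓ) (g : Ed d → ℂ) (c : Ed d) :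
    oscTerm d δ r g (cube d c ℓ) ≤ Ofun d δ K C0 r g (openCube d c ℓ) := by
  have hC0pos : (0:ℝ) < C0 := lt_trans one_pos hC0
  set i₀ : Fin d := ⟨0, hd⟩
  set a : ℝ := ℓ / (2 * C0) with ha_def
  set gg : ℝ := ℓ / 2 - a with hgg_def
  have ha : 0 < a := by positivity
  have ha_lt : a < ℓ / 2 := by
    rw [ha_def]
    calc ℓ / (2 * C0) < ℓ / (2 * 1) := by
          apply div_lt_div_of_pos_left hℓ (by norm_num) (by linarith)
      _ = ℓ / 2 := by norm_num
  have hgg : 0 < gg := by rw [hgg_def]; linarith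
  have hagg : a + gg = ℓ / 2 := by rw [hgg_def]; ring
  have ht : ∀ m : ℕ, 0 < (2⁻¹:ℝ)^(m+1) ∧ (2⁻¹:ℝ)^(m+1) ≤ 1/2 := by
    intro m
    constructor
    · positivity
    · calc (2⁻¹:ℝ)^(m+1) ≤ (2⁻¹:ℝ)^1 :=
          pow_le_pow_of_le_one (by norm_num) (by norm_num) (by omega)
        _ = 1/2 := by norm_num
  have htdec : ∀ m m' : ℕ, m < m' → (2⁻¹:ℝ)^(m'+1) ≤ (2⁻¹:ℝ)^(m+1) / 2 := by
    intro m m' hmm'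
    calc (2⁻¹:ℝ)^(m'+1) ≤ (2⁻¹:ℝ)^(m+2) :=
        pow_le_pow_of_le_one (by norm_num) (by norm_num) (by omega)
      _ = (2⁻¹:ℝ)^(m+1) / 2 := by rw [pow_succ]; ring
  -- coordinate bounds for membership in family cubes
  have hmem0 : ∀ x : Ed d, x ∈ cube d (famCenter d c i₀ a gg 0) (famSide ℓ C0 gg 0) →
      ∀ i, |x i - c i| ≤ a := by
    intro x hx i
    have := hx i
    simp only [famCenter, famSide] at this
    calc |x i - c i| ≤ (ℓ / C0) / 2 := this
      _ = a := by rw [ha_def]; ring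
  have hmemS : ∀ (m : ℕ) (x : Ed d),
      x ∈ cube d (famCenter d c i₀ a gg (m+1)) (famSide ℓ C0 gg (m+1)) →
      (∀ i, i ≠ i₀ → |x i - c i| ≤ gg * (2⁻¹:ℝ)^(m+1) / 32) ∧
      (a + gg * (2⁻¹:ℝ)^(m+1) * (31/32) ≤ x i₀ - c i₀ ∧
        x i₀ - c i₀ ≤ a + gg * (2⁻¹:ℝ)^(m+1) * (33/32)) := by
    intro m x hx
    set t := (2⁻¹:ℝ)^(m+1) with htdef
    have hb : ∀ i, |x i - famCenter d c i₀ a gg (m+1) i| ≤ gg * t / 32 := by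
      intro i
      have := hx i
      simp only [famSide] at this
      calc |x i - famCenter d c i₀ a gg (m+1) i| ≤ (gg * t / 16) / 2 := this
        _ = gg * t / 32 := by ring
    constructor
    · intro i hi
      have h1 := hb i
      have h2 : famCenter d c i₀ a gg (m+1) i = c i := by
        simp only [famCenter, PiLp.toLp_apply, if_neg hi]
      rwa [h2] at h1
    · have h1 := hb i₀
      have h2 : famCenter d c i₀ a gg (m+1) i₀ = c i₀ + (a + gg * t) := by
        simp only [famCenter, PiLp.toLp_apply, if_pos rfl]
        rw [if_pos]
        trivial
      rw [h2] at h1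
      rw [abs_le] at h1
      constructor <;> [linarith [h1.1]; linarith [h1.2]]
  -- the family
  refine le_trans ?_ (le_iSup (fun F : CubeFamily d K (openCube d c ℓ) =>
    ∑' n, oscTerm d δ r g (cube d (F.center n) (C0 * F.side n)))
    ⟨famCenter d c i₀ a gg, famSide ℓ C0 gg, ?_, ?_, ?_⟩)
  · -- oscTerm ≤ tsum
    have h0 : cube d (famCenter d c i₀ a gg 0) (C0 * famSide ℓ C0 gg 0) = cube d c ℓ := by
      have : C0 * famSide ℓ C0 gg 0 = ℓ := by
        simp only [famSide]; field_simp
      rw [this]; rfl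
    calc oscTerm d δ r g (cube d c ℓ)
        = oscTerm d δ r g (cube d (famCenter d c i₀ a gg 0) (C0 * famSide ℓ C0 gg 0)) := by
          rw [h0]
      _ ≤ ∑' n, oscTerm d δ r g (cube d (famCenter d c i₀ a gg n) (C0 * famSide ℓ C0 gg n)) :=
          ENNReal.le_tsum 0
  · -- side_pos
    intro n
    cases n with
    | zero => simp only [famSide]; positivity
    | succ m => simp only [famSide]; positivity
  · -- cube_subset
    intro n
    cases n with
    | zero =>
      intro x hx i
      have := hmem0 x hx i
      calc |x i - c i| ≤ a := this
        _ < ℓ / 2 := ha_lt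
    | succ m =>
      intro x hx
      obtain ⟨hoff, hi₀⟩ := hmemS m x hx
      set t := (2⁻¹:ℝ)^(m+1) with htdef
      obtain ⟨ht1, ht2⟩ := ht m
      have hggt : gg * t ≤ gg * (1/2) := mul_le_mul_of_nonneg_left ht2 hgg.le
      intro i
      by_cases hii : i = i₀
      · subst hii
        rw [abs_lt]
        constructor
        · nlinarith
        · nlinarith
      · have := hoff i hii
        have h2 : gg * t / 32 < ℓ / 2 := by nlinarith
        calc |x i - c i| ≤ gg * t / 32 := this
          _ < ℓ / 2 := h2
  · -- overlap
    intro x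
    refine le_trans (tsum_indicator_le_one ?_ x) ?_
    · -- pairwise disjointness
      intro n n' hnn'
      have key : ∀ m m' : ℕ, m < m' → Disjoint
          (cube d (famCenter d c i₀ a gg (m+1)) (famSide ℓ C0 gg (m+1)))
          (cube d (famCenter d c i₀ a gg (m'+1)) (famSide ℓ C0 gg (m'+1))) := by
        intro m m' hmm'
        rw [Set.disjoint_left]
        intro y hy hy'
        have h1 := (hmemS m y hy).2.1
        have h2 := (hmemS m' y hy').2.2
        have h3 := htdec m m' hmm'
        obtain ⟨ht1, _⟩ := ht m
        nlinarith
      have key0 : ∀ m : ℕ, Disjoint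
          (cube d (famCenter d c i₀ a gg 0) (famSide ℓ C0 gg 0))
          (cube d (famCenter d c i₀ a gg (m+1)) (famSide ℓ C0 gg (m+1))) := by
        intro m
        rw [Set.disjoint_left]
        intro y hy hy'
        have h1 := hmem0 y hy i₀
        have h2 := (hmemS m y hy').2.1
        obtain ⟨ht1, _⟩ := ht m
        rw [abs_le] at h1
        nlinarith [h1.2]
      rcases n with _ | m <;> rcases n' with _ | m'
      · omega
      · exact key0 m'
      · exact (key0 m).symm
      · rcases lt_or_gt_of_ne (by omega : m ≠ m') with h | h
        · exact key m m' h
        · exact (key m' m h).symm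
    · calc (1:ℝ≥0∞) = ENNReal.ofReal 1 := ENNReal.ofReal_one.symm
        _ ≤ ENNReal.ofReal K := ENNReal.ofReal_le_ofReal hK

lemma eAmalgam_cube_ne_zero (d : ℕ) {q p : ℝ} (hq : 0 < q) (hp : 0 < p) (c : Ed d)
    {ℓ : ℝ} (hℓ : 0 < ℓ) :
    eAmalgam d q p ((cube d c ℓ).indicator fun _ => 1) ≠ 0 := by
  rw [eAmalgam_indicator d p hq (measurableSet_cube d c ℓ)]
  obtain ⟨k₀, hk₀⟩ := exists_volume_inter_unitCube_pos d c hℓ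
  have hne : volume (cube d c ℓ ∩ unitCube d k₀) ≠ ∞ :=
    (lt_of_le_of_lt (measure_mono inter_subset_left) (volume_cube_lt_top d c ℓ)).ne
  have h1 : (0:ℝ≥0∞) < volume (cube d c ℓ ∩ unitCube d k₀) ^ ((1/q) * p) :=
    ENNReal.rpow_pos hk₀ hne
  have h2 := ENNReal.le_tsum (f := fun k : Fin d → ℤ =>
    volume (cube d c ℓ ∩ unitCube d k) ^ ((1/q) * p)) k₀
  intro h
  rw [ENNReal.rpow_eq_zero_iff] at h
  rcases h with ⟨hsum0, _⟩ | ⟨_, hneg⟩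
  · rw [hsum0] at h2
    exact absurd (lt_of_lt_of_le h1 h2) (lt_irrefl 0)
  · have : (0:ℝ) < 1/p := by positivity
    linarith

lemma layerNorm_single (d : ℕ) (q p η : ℝ) (Ω0 : Set (Ed d)) :
    layerNorm d q p η (fun j => if j = 0 then Ω0 else ∅) =
      eAmalgam d (q/η) (p/η) (Ω0.indicator fun _ => 1) := by
  unfold layerNorm
  congr 1
  funext x
  rw [tsum_eq_single (0:ℤ) (fun j hj => by simp [if_neg hj])]
  simp

lemma eAmalgam_rpow_eta (d : ℕ) {q p η : ℝ} (hq : 0 < q) (hp : 0 < p) (hη : 0 < η)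
    {S : Set (Ed d)} (hS : MeasurableSet S) :
    eAmalgam d (q/η) (p/η) (S.indicator fun _ => 1) ^ (1/η) =
      eAmalgam d q p (S.indicator fun _ => 1) := by
  rw [eAmalgam_indicator d (p/η) (by positivity : (0:ℝ) < q/η) hS,
    eAmalgam_indicator d p hq hS, ← ENNReal.rpow_mul]
  congr 1
  · refine tsum_congr fun k => ?_
    congr 1
    field_simp
  · field_simp

lemma campanato_le_const (d δ : ℕ) {q p η r K C0 : ℝ}
    (hd : 0 < d) (hq0 : 0 < q) (hqp : q ≤ p) (hη : 0 < η) (hr : 1 ≤ r)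
    (hK : 1 ≤ K) (hC0 : 1 < C0) (g : Ed d → ℂ) (C : ℝ≥0∞)
    (hC : C ∈ ONormSet d δ K C0 q p η r g) :
    campanato d δ r (φ1 d q p) g ≤ C := by
  have hp : 0 < p := lt_of_lt_of_le hq0 hqp
  have hr0 : (0:ℝ) < r := lt_of_lt_of_le one_pos hr
  refine iSup_le fun c => iSup_le fun ℓ => iSup_le fun hℓ => ?_
  set Q := cube d c ℓ with hQdef
  set Ω0 := openCube d c ℓ with hΩ0def
  set Ω : ℤ → Set (Ed d) := fun j => if j = 0 then Ω0 else ∅ with hΩ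
  set A := eAmalgam d q p (Q.indicator fun _ => (1:ℝ≥0∞)) with hA
  have hmeasΩ0 : MeasurableSet Ω0 := (isOpen_openCube d c ℓ).measurableSet
  have hQ0 : volume Q ≠ 0 := (volume_cube_pos d c hℓ).ne'
  have hQtop : volume Q ≠ ∞ := (volume_cube_lt_top d c ℓ).ne
  have hlayer : layerNorm d q p η Ω = eAmalgam d (q/η) (p/η) (Ω0.indicator fun _ => 1) :=
    layerNorm_single d q p η Ω0
  have hfin : layerNorm d q p η Ω ≠ ∞ := by
    rw [hlayer]
    refine eAmalgam_indicator_ne_top d (by positivity) ?_ hmeasΩ0 ?_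
    · gcongr
    · exact (lt_of_le_of_lt (measure_mono (openCube_subset_cube d c ℓ))
        (volume_cube_lt_top d c ℓ)).ne
  have hopen : ∀ j, IsOpen (Ω j) := by
    intro j
    by_cases h : j = 0 <;> simp [hΩ, hΩ0def, h, isOpen_openCube, isOpen_empty]
  have hproper : ∀ j, Ω j ≠ univ := by
    intro j
    by_cases h : j = 0
    · subst h
      simp only [hΩ, if_pos]
      intro hu
      have hz : c + ℓ • (EuclideanSpace.single (⟨0, hd⟩ : Fin d) (1:ℝ)) ∈ Ω0 := by
        rw [hu]; trivial
      rw [hΩ0def] at hz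
      have h1 := hz ⟨0, hd⟩
      simp only [PiLp.add_apply, PiLp.smul_apply, EuclideanSpace.single_apply,
        if_pos rfl, smul_eq_mul, mul_one, add_sub_cancel_left, if_true] at h1
      rw [abs_of_pos hℓ] at h1
      linarith
    · simp only [hΩ, h, if_neg h]
      exact Set.empty_ne_univ
  have hineq := hC Ω hopen hproper hfin
  have hterm : Ofun d δ K C0 r g Ω0 ≤ C * layerNorm d q p η Ω ^ (1/η) := by
    refine le_trans ?_ hineq
    have h0 := ENNReal.le_tsum (f := fun j : ℤ =>
      (2:ℝ≥0∞) ^ ((j:ℤ):ℝ) * Ofun d δ K C0 r g (Ω j)) 0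
    simpa [hΩ] using h0
  have hosc : oscTerm d δ r g Q ≤ C * A := by
    calc oscTerm d δ r g Q ≤ Ofun d δ K C0 r g Ω0 := oscTerm_le_Ofun d δ hd hK hC0 hℓ g c
      _ ≤ C * layerNorm d q p η Ω ^ (1/η) := hterm
      _ = C * eAmalgam d q p (Ω0.indicator fun _ => 1) := by
          rw [hlayer, eAmalgam_rpow_eta d hq0 hp hη hmeasΩ0]
      _ ≤ C * A := mul_le_mul_right (eAmalgam_indicator_mono d hq0 hp hmeasΩ0
          (measurableSet_cube d c ℓ) (openCube_subset_cube d c ℓ)) _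
  have hA0 : A ≠ 0 := eAmalgam_cube_ne_zero d hq0 hp c hℓ
  have hAtop : A ≠ ∞ :=
    eAmalgam_indicator_ne_top d hq0 hqp (measurableSet_cube d c ℓ) hQtop
  set I := ∫⁻ x in Q, (‖g x - polyProj d δ Q g x‖₊ : ℝ≥0∞) ^ r with hI
  have hTalg : (φ1 d q p c ℓ)⁻¹ * ((volume Q)⁻¹ * I) ^ (1/r) = A⁻¹ * oscTerm d δ r g Q := by
    have hphi : φ1 d q p c ℓ = A * (volume Q)⁻¹ := rfl
    rw [hphi, ENNReal.mul_inv (Or.inr (ENNReal.inv_ne_top.mpr hQ0)) (Or.inl hAtop), inv_inv,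
      ENNReal.mul_rpow_of_nonneg _ _ (by positivity : (0:ℝ) ≤ 1/r), ENNReal.inv_rpow]
    have hv : volume Q * (volume Q ^ (1/r))⁻¹ = volume Q ^ (1 - 1/r) := by
      rw [← ENNReal.rpow_neg]
      nth_rewrite 1 [← ENNReal.rpow_one (volume Q)]
      rw [← ENNReal.rpow_add _ _ hQ0 hQtop]
      norm_num
      rw [sub_eq_add_neg]
    calc A⁻¹ * volume Q * ((volume Q ^ (1/r))⁻¹ * I ^ (1/r))
        = A⁻¹ * ((volume Q * (volume Q ^ (1/r))⁻¹) * I ^ (1/r)) := by ring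
      _ = A⁻¹ * (volume Q ^ (1 - 1/r) * I ^ (1/r)) := by rw [hv]
      _ = A⁻¹ * oscTerm d δ r g Q := rfl
  calc (φ1 d q p c ℓ)⁻¹ * ((volume Q)⁻¹ * I) ^ (1/r)
      = A⁻¹ * oscTerm d δ r g Q := hTalg
    _ ≤ A⁻¹ * (C * A) := mul_le_mul_right hosc _
    _ = C * (A⁻¹ * A) := by ring
    _ = C := by rw [ENNReal.inv_mul_cancel hA0 hAtop, mul_one]

/-- embedding `𝓛^{(q,p,η)}_{r,φ₁,δ} ↪ 𝓛_{r,φ₁,δ} ↪ 𝓛_{r,φ₂,δ}`: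
`‖g‖_{𝓛_{r,φ₂,δ}} ≤ ‖g‖_{𝓛_{r,φ₁,δ}} ≤ ‖g‖_{𝓛^{(q,p,η)}_{r,φ₁,δ}}`. -/
theorem stmt_8 (d δ : ℕ) (q p η r K C0 : ℝ)
    (hq0 : 0 < q) (hq1 : q ≤ 1) (hqp : q ≤ p) (hη : 0 < η) (hr : 1 ≤ r)
    (hK : 1 ≤ K) (hC0 : 1 < C0)
    (g : Ed d → ℂ) (hg : memLocLr d r g)
    (hmem : ∃ C ∈ ONormSet d δ K C0 q p η r g, C ≠ ∞) :
    campanato d δ r (φ2 d q) g ≤ campanato d δ r (φ1 d q p) g ∧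
    campanato d δ r (φ1 d q p) g ≤ sInf (ONormSet d δ K C0 q p η r g) := by
  constructor
  · exact campanato_phi2_le_phi1 d δ r hq0 hqp g
  · refine le_sInf fun C hC => ?_
    rcases Nat.eq_zero_or_pos d with hd | hd
    · subst hd
      rw [campanato_dzero δ (lt_of_lt_of_le one_pos hr) _ g]
      exact zero_le
    · exact campanato_le_const d δ hd hq0 hqp hη hr hK hC0 g C hC

end HA
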